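/- Let a, ã, β₀ : Fin p → ℝ, W_j = |a_j| − |ã_j|, S₀ = {j : β₀_j ≠ 0}, s₀ = |S₀|, and assume the ℓ1-error bound Σ_{j=1}^p (|a_j − β₀_j| + |ã_j|) ≤ C_{ℓ1} λ s₀ and min_{j ∈ S₀} |β₀_j| ≥ κλ/C_λ, with λ, κ, C_λ, C_{ℓ1} > 0. If moreover a_j ≠ 0 implies W_j ≠ 0 for every j (no ties among the nonzero Lasso coefficients), then #{j ∈ S₀ : W_j ≠ 0} ≥ (1 − C_{ℓ1} C_λ κ⁻¹) · s₀. -/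

import Mathlib

open Finset

/-- under the ℓ1-error bound and the signal-strength condition, if
`a j ≠ 0` implies `W j ≠ 0` for every `j` (no ties among the nonzero Lasso
coefficients), then `#{j ∈ S₀ : W j ≠ 0} ≥ (1 - C_{ℓ1} C_λ κ⁻¹) s₀`, where
`W j = |a j| - |ã j|`. -/
theorem support_of_W_covers_relevant
    {p : ℕ} (hp : 1 ≤ p) (a atk β₀ : Fin p → ℝ)
    (W : Fin p → ℝ) (hW : ∀ j, W j = |a j| - |atk j|)
    (S₀ : Finset (Fin p)) (hS₀ : S₀ = univ.filter fun j : Fin p => β₀ j ≠ 0)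
    (s₀ : ℝ) (hs₀ : s₀ = (S₀.card : ℝ))
    (lam κ Clam Cl1 : ℝ) (hlam : 0 < lam) (hκ : 0 < κ)
    (hClam : 0 < Clam) (hCl1 : 0 < Cl1)
    (hl1 : ∑ j, (|a j - β₀ j| + |atk j|) ≤ Cl1 * lam * s₀)
    (hsignal : ∀ j ∈ S₀, κ * lam / Clam ≤ |β₀ j|)
    (hsupp : ∀ j : Fin p, a j ≠ 0 → W j ≠ 0) :
    (1 - Cl1 * Clam * κ⁻¹) * s₀ ≤ ((S₀.filter fun j : Fin p => W j ≠ 0).card : ℝ) := by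
  classical
  set G := S₀.filter fun j : Fin p => W j ≠ 0 with hG
  set B := S₀.filter fun j : Fin p => ¬ W j ≠ 0 with hB
  have hcard : G.card + B.card = S₀.card :=
    Finset.card_filter_add_card_filter_not _
  -- each bad index contributes at least κ*lam/Clam to the ℓ1 error
  have hterm : ∀ j ∈ B, κ * lam / Clam ≤ |a j - β₀ j| + |atk j| := by
    intro j hj
    simp only [hB, Finset.mem_filter, not_not] at hj
    obtain ⟨hjS, hjW⟩ := hj
    have ha : a j = 0 := by
      by_contra h
      exact hsupp j h hjW
    have := hsignal j hjS
    have h1 : |a j - β₀ j| = |β₀ j| := by rw [ha]; simp [abs_sub_comm]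
    have h2 : (0:ℝ) ≤ |atk j| := abs_nonneg _
    linarith [h1 ▸ this]
  have hsumB : κ * lam / Clam * B.card ≤ ∑ j ∈ B, (|a j - β₀ j| + |atk j|) := by
    calc κ * lam / Clam * B.card = ∑ _j ∈ B, κ * lam / Clam := by
          rw [Finset.sum_const]; ring
      _ ≤ ∑ j ∈ B, (|a j - β₀ j| + |atk j|) := Finset.sum_le_sum hterm
  have hsub : ∑ j ∈ B, (|a j - β₀ j| + |atk j|) ≤ ∑ j, (|a j - β₀ j| + |atk j|) :=
    Finset.sum_le_sum_of_subset_of_nonneg (Finset.subset_univ _)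
      (fun j _ _ => by positivity)
  have hBbound : κ * lam / Clam * B.card ≤ Cl1 * lam * s₀ := by
    linarith
  -- B.card ≤ Cl1 * Clam * κ⁻¹ * s₀
  have hB2 : (B.card : ℝ) ≤ Cl1 * Clam * κ⁻¹ * s₀ := by
    have hposq : 0 < κ * lam / Clam := by positivity
    rw [div_mul_eq_mul_div, div_le_iff₀ hClam] at hBbound
    have : κ * lam * B.card ≤ Cl1 * lam * s₀ * Clam := hBbound
    have h3 : (B.card : ℝ) ≤ Cl1 * lam * s₀ * Clam / (κ * lam) := by
      rw [le_div_iff₀ (by positivity)]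
      linarith [this]
    calc (B.card : ℝ) ≤ Cl1 * lam * s₀ * Clam / (κ * lam) := h3
      _ = Cl1 * Clam * κ⁻¹ * s₀ := by field_simp
  have hs : s₀ = (G.card : ℝ) + (B.card : ℝ) := by
    rw [hs₀, ← hcard]; push_cast; ring
  nlinarith [hB2, hs]
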